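/- If a probabilistic abstract reduction system is locally almost-surely convergent then it is almost-surely terminating. -/

import Mathlib

open scoped ENNReal NNReal

/-- An element `t` is a *normal form* of the reduction relation `r`
if there is no `u` with `r t u`. -/
def NormalForm {A : Type*} (r : A → A → Prop) (t : A) : Prop := ¬∃ u, r t u

/-- `NFof r s` is the set of normal forms reachable from `s`
via the reflexive-transitive closure of `r`. -/
def NFof {A : Type*} (r : A → A → Prop) (s : A) : Set A :=
  {t | NormalForm r t ∧ Relation.ReflTransGen r s t}

/-- `l` is a finite path from `s` to `t`: a nonempty list starting at `s`,
ending at `t`, whose consecutive elements are related by `r`.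
(A list `[s₀, s₁, …, sₙ]` represents the path `s₀ → s₁ → ⋯ → sₙ`, `n ≥ 0`.) -/
def IsPath {A : Type*} (r : A → A → Prop) (s t : A) (l : List A) : Prop :=
  l.Chain' r ∧ l.head? = some s ∧ l.getLast? = some t

/-- Confluence of an abstract reduction system. -/
def Confluent {A : Type*} (r : A → A → Prop) : Prop :=
  ∀ s s₁ s₂, Relation.ReflTransGen r s s₁ → Relation.ReflTransGen r s s₂ →
    ∃ t, Relation.ReflTransGen r s₁ t ∧ Relation.ReflTransGen r s₂ t

/-- An ARS is normalizing if every element reaches some normal form. -/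
def Normalizing {A : Type*} (r : A → A → Prop) : Prop :=
  ∀ s, ∃ t, NormalForm r t ∧ Relation.ReflTransGen r s t

/-- A probabilistic abstract reduction system (PARS) on a countable set `A`:
a reduction relation `rel` and probabilities `P : A → A → ℝ≥0` with
`P s t > 0` iff `s → t`, and `∑ₜ P s t = 1` for every reducible `s`. -/
structure PARS (A : Type*) [Countable A] where
  rel : A → A → Prop
  P : A → A → ℝ≥0
  pos_iff : ∀ s t, 0 < P s t ↔ rel s t
  sum_one : ∀ s, (∃ t, rel s t) → ∑' t, (P s t : ℝ≥0∞) = 1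

namespace PARS

variable {A : Type*} [Countable A]

/-- The probability of a finite path `[s₀, s₁, …, sₙ]`,
namely `∏_{i=1}^n P(s_{i-1}, s_i)`. -/
noncomputable def pathProb (S : PARS A) (l : List A) : ℝ≥0∞ :=
  ((l.zip l.tail).map fun p => (S.P p.1 p.2 : ℝ≥0∞)).prod

/-- `P(s →* t)`: the sum, over all finite paths from `s` to `t`,
of the path probabilities. -/
noncomputable def probReach (S : PARS A) (s t : A) : ℝ≥0∞ :=
  ∑' l : {l : List A // IsPath S.rel s t l}, S.pathProb l.1

/-- `∑_{t ∈ NF(s)} P(s →* t)`. -/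
noncomputable def probNF (S : PARS A) (s : A) : ℝ≥0∞ :=
  ∑' t : NFof S.rel s, S.probReach s t.1

/-- `P(s →∞) := 1 - ∑_{t ∈ NF(s)} P(s →* t)`, the probability of diverging. -/
noncomputable def probDiverge (S : PARS A) (s : A) : ℝ :=
  1 - (S.probNF s).toReal

/-- Almost-sure termination: every element diverges with probability `0`. -/
def ASTerminating (S : PARS A) : Prop := ∀ s, S.probDiverge s = 0

/-- Almost-sure convergence: whenever `s →* s₁` and `s →* s₂`, there is a
normal form `t` with `s₁ →* t`, `s₂ →* t` and `P(s₁ →* t) = P(s₂ →* t) = 1`. -/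
def ASConvergent (S : PARS A) : Prop :=
  ∀ s s₁ s₂, Relation.ReflTransGen S.rel s s₁ → Relation.ReflTransGen S.rel s s₂ →
    ∃ t, NormalForm S.rel t ∧ Relation.ReflTransGen S.rel s₁ t ∧
      Relation.ReflTransGen S.rel s₂ t ∧
      S.probReach s₁ t = 1 ∧ S.probReach s₂ t = 1

/-- Local almost-sure convergence: whenever `s → s₁` and `s → s₂`, there is a
normal form `t` with `s₁ →* t`, `s₂ →* t` and `P(s₁ →* t) = P(s₂ →* t) = 1`. -/
def LocallyASConvergent (S : PARS A) : Prop :=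
  ∀ s s₁ s₂, S.rel s s₁ → S.rel s s₂ →
    ∃ t, NormalForm S.rel t ∧ Relation.ReflTransGen S.rel s₁ t ∧
      Relation.ReflTransGen S.rel s₂ t ∧
      S.probReach s₁ t = 1 ∧ S.probReach s₂ t = 1

end PARS

section Aux

open PARS

variable {A : Type*} [Countable A]

lemma pathProb_singleton (S : PARS A) (a : A) : S.pathProb [a] = 1 := by
  simp [PARS.pathProb]

lemma pathProb_cons_cons (S : PARS A) (a b : A) (l : List A) :
    S.pathProb (a :: b :: l) = (S.P a b : ℝ≥0∞) * S.pathProb (b :: l) := by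
  simp [PARS.pathProb]

lemma eq_cons_tail {l : List A} {s : A} (h : l.head? = some s) : l = s :: l.tail := by
  cases l with
  | nil => simp at h
  | cons a t => simp at h; simp [h]

lemma eq_headI_cons_tail [Inhabited A] {l : List A} (h : l ≠ []) : l = l.headI :: l.tail := by
  cases l with
  | nil => exact absurd rfl h
  | cons a t => rfl

lemma P_eq_zero (S : PARS A) {s t : A} (h : ¬ S.rel s t) : S.P s t = 0 := by
  by_contra h'
  exact h ((S.pos_iff s t).1 (pos_iff_ne_zero.2 h'))

lemma sum_paths_le_one (S : PARS A) :
    ∀ (n : ℕ) (s : A) (L : Finset (List A)),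
      (∀ l ∈ L, l.Chain' S.rel ∧ l.head? = some s ∧ l.length ≤ n ∧
        ∃ t, l.getLast? = some t ∧ NormalForm S.rel t) →
      ∑ l ∈ L, S.pathProb l ≤ 1 := by
  intro n
  induction n with
  | zero =>
      intro s L hL
      have hE : L = ∅ := Finset.eq_empty_of_forall_notMem fun l hl => by
        obtain ⟨_, hh, hlen, _⟩ := hL l hl
        cases l with
        | nil => simp at hh
        | cons a t => simp at hlen
      simp [hE]
  | succ n ih =>
      intro s L hL
      classical
      have hhead : ∀ l ∈ L, l.head? = some s := fun l hl => (hL l hl).2.1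
      by_cases hs : ∃ u, S.rel s u
      · haveI : Inhabited A := ⟨s⟩
        have hcons : ∀ l ∈ L, l = s :: l.tail ∧ l.tail ≠ [] := by
          intro l hl
          have h1 : l = s :: l.tail := eq_cons_tail (hhead l hl)
          refine ⟨h1, fun h0 => ?_⟩
          obtain ⟨_, _, _, t, hlast, hnf⟩ := hL l hl
          rw [h1, h0] at hlast
          simp at hlast
          exact hnf (hlast ▸ hs)
        set T := L.image List.tail with hT
        have himg : ∑ l' ∈ T, S.pathProb (s :: l') = ∑ l ∈ L, S.pathProb l := by
          rw [hT, Finset.sum_image (fun x hx y hy hxy => by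
            rw [eq_cons_tail (hhead x hx), eq_cons_tail (hhead y hy), hxy])]
          exact Finset.sum_congr rfl fun l hl => by rw [← eq_cons_tail (hhead l hl)]
        have hT' : ∀ l' ∈ T, l' ≠ [] ∧ l'.Chain' S.rel ∧ S.rel s l'.headI ∧
            l'.length ≤ n ∧ l'.head? = some l'.headI ∧
            ∃ t, l'.getLast? = some t ∧ NormalForm S.rel t := by
          intro l' hl'
          obtain ⟨l, hl, rfl⟩ := Finset.mem_image.1 hl'
          obtain ⟨h1, h2⟩ := hcons l hl
          obtain ⟨hch, _, hlen, t, hlast, hnf⟩ := hL l hl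
          cases htl : l.tail with
          | nil => exact absurd htl h2
          | cons b r =>
              rw [h1, htl] at hch hlast hlen
              have hch' := List.isChain_cons_cons.1 hch
              refine ⟨by simp, hch'.2, hch'.1, ?_, by simp, t, ?_, hnf⟩
              · simpa using hlen
              · rw [List.getLast?_cons_cons] at hlast; exact hlast
        set B := T.image List.headI with hB
        have hfib := Finset.sum_fiberwise_of_maps_to (g := List.headI) (t := B)
            (fun l' hl' => Finset.mem_image_of_mem _ hl') (fun l' => S.pathProb (s :: l'))
        have hinner : ∀ b ∈ B,
            ∑ l' ∈ T.filter (fun l' => l'.headI = b), S.pathProb (s :: l') ≤ (S.P s b : ℝ≥0∞) := by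
          intro b hb
          have hterm : ∀ l' ∈ T.filter (fun l' => l'.headI = b),
              S.pathProb (s :: l') = (S.P s b : ℝ≥0∞) * S.pathProb l' := by
            intro l' hl'
            obtain ⟨hmem, hbeq⟩ := Finset.mem_filter.1 hl'
            obtain ⟨hne, _, _, _, _, _⟩ := hT' l' hmem
            conv_lhs => rw [eq_headI_cons_tail hne]
            rw [pathProb_cons_cons, ← eq_headI_cons_tail hne, hbeq]
          rw [Finset.sum_congr rfl hterm, ← Finset.mul_sum]
          have hle : ∑ l' ∈ T.filter (fun l' => l'.headI = b), S.pathProb l' ≤ 1 := by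
            apply ih b
            intro l' hl'
            obtain ⟨hmem, hbeq⟩ := Finset.mem_filter.1 hl'
            obtain ⟨hne, hch, _, hlen, hh, t, hlast, hnf⟩ := hT' l' hmem
            exact ⟨hch, by rw [hh, hbeq], hlen, t, hlast, hnf⟩
          calc (S.P s b : ℝ≥0∞) * ∑ l' ∈ T.filter (fun l' => l'.headI = b), S.pathProb l'
              ≤ (S.P s b : ℝ≥0∞) * 1 := mul_le_mul_right hle _
            _ = (S.P s b : ℝ≥0∞) := mul_one _
        calc ∑ l ∈ L, S.pathProb l = ∑ l' ∈ T, S.pathProb (s :: l') := himg.symm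
          _ = ∑ b ∈ B, ∑ l' ∈ T.filter (fun l' => l'.headI = b), S.pathProb (s :: l') := hfib.symm
          _ ≤ ∑ b ∈ B, (S.P s b : ℝ≥0∞) := Finset.sum_le_sum hinner
          _ ≤ ∑' b : A, (S.P s b : ℝ≥0∞) := ENNReal.sum_le_tsum B
          _ = 1 := S.sum_one s hs
      · have hsub : L ⊆ {[s]} := by
          intro l hl
          have h1 := eq_cons_tail (hhead l hl)
          obtain ⟨hch, _, _, _⟩ := hL l hl
          cases htl : l.tail with
          | nil => rw [Finset.mem_singleton, h1, htl]
          | cons b r =>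
              rw [h1, htl] at hch
              exact absurd ⟨b, (List.isChain_cons_cons.1 hch).1⟩ hs
        calc ∑ l ∈ L, S.pathProb l ≤ ∑ l ∈ ({[s]} : Finset (List A)), S.pathProb l :=
              Finset.sum_le_sum_of_subset hsub
          _ = 1 := by simp [pathProb_singleton]



lemma probNF_le_one (S : PARS A) (s : A) : S.probNF s ≤ 1 := by
  classical
  have hsig : S.probNF s
      = ∑' (p : Σ t : NFof S.rel s, {l // IsPath S.rel s t.1 l}), S.pathProb p.2.1 :=
    (ENNReal.tsum_sigma (β := fun t : NFof S.rel s => {l // IsPath S.rel s t.1 l})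
      (fun t l => S.pathProb l.1)).symm
  rw [hsig, ENNReal.tsum_eq_iSup_sum]
  apply iSup_le
  intro F
  have hinj : ∀ p ∈ F, ∀ q ∈ F, p.2.1 = q.2.1 → p = q := by
    rintro ⟨⟨t₁, ht₁⟩, ⟨l₁, hl₁⟩⟩ - ⟨⟨t₂, ht₂⟩, ⟨l₂, hl₂⟩⟩ - hpq
    simp only at hpq
    subst hpq
    have : some t₁ = some t₂ := by rw [← hl₁.2.2, ← hl₂.2.2]
    obtain rfl : t₁ = t₂ := by injection this
    rfl
  have himg : ∑ p ∈ F, S.pathProb p.2.1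
      = ∑ l ∈ F.image (fun p => p.2.1), S.pathProb l := (Finset.sum_image hinj).symm
  rw [himg]
  apply sum_paths_le_one S ((F.image (fun p => p.2.1)).sup List.length) s
  intro l hl
  obtain ⟨p, hp, rfl⟩ := Finset.mem_image.1 hl
  obtain ⟨hch, hh, hlast⟩ := p.2.2
  exact ⟨hch, hh, Finset.le_sup hl, p.1.1, hlast, p.1.2.1⟩

lemma one_le_probNF_of_nf (S : PARS A) (s : A) (hnf : NormalForm S.rel s) :
    1 ≤ S.probNF s := by
  have hpath : IsPath S.rel s s [s] := ⟨List.isChain_singleton s, by simp, by simp⟩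
  calc (1:ℝ≥0∞) = S.pathProb [s] := (pathProb_singleton S s).symm
    _ ≤ S.probReach s s := ENNReal.le_tsum (⟨[s], hpath⟩ : {l // IsPath S.rel s s l})
    _ ≤ S.probNF s := ENNReal.le_tsum (⟨s, hnf, Relation.ReflTransGen.refl⟩ : NFof S.rel s)

lemma one_le_probNF_of_red (S : PARS A) (h : S.LocallyASConvergent) (s : A)
    (hs : ∃ u, S.rel s u) : 1 ≤ S.probNF s := by
  classical
  have hch : ∀ s₁ : {x // S.rel s x}, ∃ t, NormalForm S.rel t ∧
      Relation.ReflTransGen S.rel s₁.1 t ∧ S.probReach s₁.1 t = 1 := by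
    rintro ⟨s₁, hr⟩
    obtain ⟨t, h1, h2, _, h4, _⟩ := h s s₁ s₁ hr hr
    exact ⟨t, h1, h2, h4⟩
  choose tgt htgt1 htgt2 htgt3 using hch
  -- the injection from (successor, path) pairs into (normal form, path) pairs
  have hpath : ∀ (s₁ : {x // S.rel s x}) (l : {l // IsPath S.rel s₁.1 (tgt s₁) l}),
      IsPath S.rel s (tgt s₁) (s :: l.1) := by
    intro s₁ l
    obtain ⟨hchn, hh, hlast⟩ := l.2
    refine ⟨?_, by simp, ?_⟩
    · show List.IsChain S.rel (s :: l.1); rw [List.isChain_cons]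
      exact ⟨fun b hb => by rw [hh] at hb; injection hb with hb; rw [← hb] at *; exact s₁.2, hchn⟩
    · show (s :: l.1).getLast? = some (tgt s₁)
      rw [eq_cons_tail hh, List.getLast?_cons_cons, ← eq_cons_tail hh]
      exact hlast
  let Fn : (Σ s₁ : {x // S.rel s x}, {l // IsPath S.rel s₁.1 (tgt s₁) l}) →
      (Σ t : NFof S.rel s, {l // IsPath S.rel s t.1 l}) :=
    fun p => ⟨⟨tgt p.1, htgt1 p.1, Relation.ReflTransGen.head p.1.2 (htgt2 p.1)⟩,
      ⟨s :: p.2.1, hpath p.1 p.2⟩⟩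
  have hFn_inj : Function.Injective Fn := by
    rintro ⟨⟨a, ha⟩, ⟨l₁, hl₁⟩⟩ ⟨⟨b, hb⟩, ⟨l₂, hl₂⟩⟩ hpq
    have hl : s :: l₁ = s :: l₂ := congrArg (fun q => q.2.1) hpq
    injection hl with _ hl
    subst hl
    have : some a = some b := by rw [← hl₁.2.1, ← hl₂.2.1]
    obtain rfl : a = b := by injection this
    rfl
  have key : (1:ℝ≥0∞) = ∑' (p : Σ s₁ : {x // S.rel s x},
      {l // IsPath S.rel s₁.1 (tgt s₁) l}), S.pathProb (s :: p.2.1) := by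
    have h0 : (1:ℝ≥0∞) = ∑' s₁ : {x // S.rel s x}, (S.P s s₁.1 : ℝ≥0∞) := by
      rw [← S.sum_one s hs]
      exact (tsum_subtype_eq_of_support_subset (s := {x | S.rel s x})
        (fun x hx => by
          by_contra hr
          exact hx (by simp [P_eq_zero S hr]))).symm
    rw [h0, ENNReal.tsum_sigma
      (β := fun s₁ : {x // S.rel s x} => {l // IsPath S.rel s₁.1 (tgt s₁) l})
      (fun s₁ l => S.pathProb (s :: l.1))]
    refine tsum_congr fun s₁ => ?_
    have h1 : ∀ l : {l // IsPath S.rel s₁.1 (tgt s₁) l},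
        S.pathProb (s :: l.1) = (S.P s s₁.1 : ℝ≥0∞) * S.pathProb l.1 := by
      intro l
      obtain ⟨hchn, hh, hlast⟩ := l.2
      show S.pathProb (s :: l.1) = _
      conv_lhs => rw [eq_cons_tail hh]
      rw [pathProb_cons_cons, ← eq_cons_tail hh]
    rw [tsum_congr h1, ENNReal.tsum_mul_left]
    rw [show (∑' l : {l // IsPath S.rel s₁.1 (tgt s₁) l}, S.pathProb l.1)
        = S.probReach s₁.1 (tgt s₁) from rfl, htgt3 s₁, mul_one]
  calc (1:ℝ≥0∞) = _ := key
    _ ≤ ∑' (q : Σ t : NFof S.rel s, {l // IsPath S.rel s t.1 l}), S.pathProb q.2.1 :=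
        ENNReal.tsum_comp_le_tsum_of_injective hFn_inj (fun q => S.pathProb q.2.1)
    _ = S.probNF s := ENNReal.tsum_sigma
      (β := fun t : NFof S.rel s => {l // IsPath S.rel s t.1 l}) (fun t l => S.pathProb l.1)

end Aux

/-- a locally almost-surely convergent PARS is almost-surely
terminating. -/
theorem asTerminating_of_locallyASConvergent
    {A : Type*} [Countable A] (S : PARS A) (h : S.LocallyASConvergent) :
    S.ASTerminating := by
  intro s
  have h1 : S.probNF s = 1 := by
    refine le_antisymm (probNF_le_one S s) ?_
    by_cases hs : ∃ u, S.rel s u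
    · exact one_le_probNF_of_red S h s hs
    · exact one_le_probNF_of_nf S s hs
  simp [PARS.probDiverge, h1]
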